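/- arXiv:1811.10319 — 5 statements merged into one kernel-verified Lean document; each statement's English description precedes it below -/
import Mathlib

section
/- Let P ⊂ ℝ^d be a finite point set. Let C* ⊂ ℝ^d with |C*| = k minimize the k-means cost ∑_{x ∈ P} min_{c ∈ C} ‖x - c‖² over all k-element subsets C of ℝ^d, and let Ĉ ⊆ P with |Ĉ| = k minimize this cost over all k-element subsets of P. Then the cost of Ĉ is at most 2 times the cost of C*. -/
/-- The k-means cost of a nonempty center set `C` for point set `P`. -/
noncomputable def kMeansCost {d : ℕ} (P C : Finset (EuclideanSpace ℝ (Fin d)))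
    (hC : C.Nonempty) : ℝ :=
  ∑ x ∈ P, C.inf' hC (fun c => ‖x - c‖ ^ 2)

section Aux

variable {E : Type*} [NormedAddCommGroup E] [InnerProductSpace ℝ E]

lemma centroid_sum_identity (S : Finset E) (m y : E)
    (hm : (S.card : ℝ) • m = ∑ x ∈ S, x) :
    ∑ x ∈ S, ‖x - y‖ ^ 2
      = (∑ x ∈ S, ‖x - m‖ ^ 2) + (S.card : ℝ) * ‖y - m‖ ^ 2 := by
  have h1 : ∀ x ∈ S, ‖x - y‖ ^ 2
      = ‖x - m‖ ^ 2 + (2 * (inner ℝ (x - m) (m - y) : ℝ) + ‖m - y‖ ^ 2) := by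
    intro x _
    rw [show x - y = (x - m) + (m - y) by abel, @norm_add_sq_real]
    ring
  rw [Finset.sum_congr rfl h1, Finset.sum_add_distrib, Finset.sum_add_distrib]
  have h2 : ∑ x ∈ S, 2 * (inner ℝ (x - m) (m - y) : ℝ) = 0 := by
    rw [← Finset.mul_sum, ← sum_inner]
    have h0 : ∑ x ∈ S, (x - m) = (0 : E) := by
      rw [Finset.sum_sub_distrib, sub_eq_zero, Finset.sum_const,
        ← Nat.cast_smul_eq_nsmul ℝ, hm]
    rw [h0, inner_zero_left, mul_zero]
  rw [h2]
  rw [Finset.sum_const, norm_sub_rev m y, nsmul_eq_mul]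
  ring

lemma fiber_bound (S : Finset E) (hS : S.Nonempty) (c : E) :
    ∃ p ∈ S, ∑ x ∈ S, ‖x - p‖ ^ 2 ≤ 2 * ∑ x ∈ S, ‖x - c‖ ^ 2 := by
  set m : E := (S.card : ℝ)⁻¹ • ∑ x ∈ S, x with hmdef
  have hcard : (S.card : ℝ) ≠ 0 := by
    exact_mod_cast Finset.card_ne_zero_of_mem hS.choose_spec
  have hm : (S.card : ℝ) • m = ∑ x ∈ S, x := by
    rw [hmdef, smul_smul, mul_inv_cancel₀ hcard, one_smul]
  obtain ⟨p, hp, hpmin⟩ := S.exists_min_image (fun x => ‖x - m‖ ^ 2) hS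
  refine ⟨p, hp, ?_⟩
  rw [centroid_sum_identity S m p hm, centroid_sum_identity S m c hm]
  have hbound : (S.card : ℝ) * ‖p - m‖ ^ 2 ≤ ∑ x ∈ S, ‖x - m‖ ^ 2 := by
    calc (S.card : ℝ) * ‖p - m‖ ^ 2 = ∑ _x ∈ S, ‖p - m‖ ^ 2 := by
          rw [Finset.sum_const, nsmul_eq_mul]
      _ ≤ ∑ x ∈ S, ‖x - m‖ ^ 2 := Finset.sum_le_sum (fun x hx => hpmin x hx)
  have hpos : (0 : ℝ) ≤ (S.card : ℝ) * ‖c - m‖ ^ 2 := by positivity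
  linarith

end Aux

theorem discrete_centers_factor_two (d k : ℕ) (hk : 0 < k)
    (P : Finset (EuclideanSpace ℝ (Fin d))) (hkP : k ≤ P.card)
    (Cstar Chat : Finset (EuclideanSpace ℝ (Fin d)))
    (hCstarCard : Cstar.card = k) (hChatCard : Chat.card = k) (hChatSub : Chat ⊆ P)
    (hCstarNe : Cstar.Nonempty) (hChatNe : Chat.Nonempty)
    (hCstarOpt : ∀ (C : Finset (EuclideanSpace ℝ (Fin d))) (hC : C.Nonempty),
      C.card = k → kMeansCost P Cstar hCstarNe ≤ kMeansCost P C hC)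
    (hChatOpt : ∀ (C : Finset (EuclideanSpace ℝ (Fin d))) (hC : C.Nonempty),
      C ⊆ P → C.card = k → kMeansCost P Chat hChatNe ≤ kMeansCost P C hC) :
    kMeansCost P Chat hChatNe ≤ 2 * kMeansCost P Cstar hCstarNe := by
  classical
  rcases P.eq_empty_or_nonempty with hP | hP
  · simp [kMeansCost, hP]
  -- assignment of each point to a closest optimal center
  have hex : ∀ x : EuclideanSpace ℝ (Fin d), ∃ c ∈ Cstar,
      Cstar.inf' hCstarNe (fun c => ‖x - c‖ ^ 2) = ‖x - c‖ ^ 2 :=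
    fun x => Finset.exists_mem_eq_inf' hCstarNe _
  choose a haC haval using hex
  set fib : EuclideanSpace ℝ (Fin d) → Finset (EuclideanSpace ℝ (Fin d)) :=
    fun c => P.filter (fun x => a x = c) with hfib
  -- representative point in P for each center
  have hpex : ∀ c : EuclideanSpace ℝ (Fin d), ∃ q ∈ P,
      ∑ x ∈ fib c, ‖x - q‖ ^ 2 ≤ 2 * ∑ x ∈ fib c, ‖x - c‖ ^ 2 := by
    intro c
    by_cases h : (fib c).Nonempty
    · obtain ⟨q, hq, hqb⟩ := fiber_bound (fib c) h c
      exact ⟨q, Finset.mem_of_mem_filter _ hq, hqb⟩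
    · rw [Finset.not_nonempty_iff_eq_empty] at h
      exact ⟨hP.choose, hP.choose_spec, by simp [h]⟩
  choose p hpP hpbound using hpex
  -- build a k-element subset of P containing all representatives
  set Q : Finset (EuclideanSpace ℝ (Fin d)) := Cstar.image p with hQ
  have hQP : Q ⊆ P := by
    intro q hq
    rw [hQ, Finset.mem_image] at hq
    obtain ⟨c, _, rfl⟩ := hq
    exact hpP c
  have hQcard : Q.card ≤ k := le_trans Finset.card_image_le (le_of_eq hCstarCard)
  obtain ⟨C, hQC, hCP, hCcard⟩ := Finset.exists_subsuperset_card_eq hQP hQcard hkP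
  have hCne : C.Nonempty := Finset.card_pos.mp (hCcard ▸ hk)
  -- cost of C is at most twice cost of Cstar
  have step1 : kMeansCost P C hCne ≤ ∑ x ∈ P, ‖x - p (a x)‖ ^ 2 := by
    refine Finset.sum_le_sum fun x _ => ?_
    exact Finset.inf'_le _ (hQC (Finset.mem_image_of_mem p (haC x)))
  have step2 : ∑ x ∈ P, ‖x - p (a x)‖ ^ 2
      = ∑ c ∈ Cstar, ∑ x ∈ fib c, ‖x - p c‖ ^ 2 := by
    rw [← Finset.sum_fiberwise_of_maps_to (fun x _ => haC x)
      (fun x => ‖x - p (a x)‖ ^ 2)]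
    refine Finset.sum_congr rfl fun c _ => Finset.sum_congr rfl fun x hx => ?_
    rw [(Finset.mem_filter.mp hx).2]
  have step3 : ∑ c ∈ Cstar, ∑ x ∈ fib c, ‖x - p c‖ ^ 2
      ≤ 2 * ∑ c ∈ Cstar, ∑ x ∈ fib c, ‖x - c‖ ^ 2 := by
    rw [Finset.mul_sum]
    exact Finset.sum_le_sum fun c _ => hpbound c
  have step4 : ∑ c ∈ Cstar, ∑ x ∈ fib c, ‖x - c‖ ^ 2
      = kMeansCost P Cstar hCstarNe := by
    have : ∀ c ∈ Cstar, ∑ x ∈ fib c, ‖x - c‖ ^ 2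
        = ∑ x ∈ fib c, Cstar.inf' hCstarNe (fun c => ‖x - c‖ ^ 2) := by
      intro c _
      refine Finset.sum_congr rfl fun x hx => ?_
      rw [haval x, (Finset.mem_filter.mp hx).2]
    rw [Finset.sum_congr rfl this,
      Finset.sum_fiberwise_of_maps_to (fun x _ => haC x)]
    rfl
  calc kMeansCost P Chat hChatNe ≤ kMeansCost P C hCne := hChatOpt C hCne hCP hCcard
    _ ≤ ∑ x ∈ P, ‖x - p (a x)‖ ^ 2 := step1
    _ = ∑ c ∈ Cstar, ∑ x ∈ fib c, ‖x - p c‖ ^ 2 := step2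
    _ ≤ 2 * ∑ c ∈ Cstar, ∑ x ∈ fib c, ‖x - c‖ ^ 2 := step3
    _ = 2 * kMeansCost P Cstar hCstarNe := by rw [step4]
end

section
/- Let F be a finite nonempty multiset of points in ℝ^d with centroid μ, and let c : ℝ^d → ℝ^d assign to each point p a center c(p). Define N as the set of points p ∈ F such that at least ⌊|F|/2⌋ other points q of F satisfy ‖p − μ‖² ≤ ‖q − μ‖², and let p̄ ∈ N minimize ‖p − c(p)‖² over N. Then |F| · ‖μ − p̄‖² ≤ 2 ∑_{p ∈ F} ‖μ − p‖² and |F| · ‖p̄ − c(p̄)‖² ≤ 2 ∑_{p ∈ F} ‖p − c(p)‖². -/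
open Finset
open scoped Classical

/-- Representative-selection bounds in the k-means fairlet analysis. -/
theorem kmeans_representative_bounds (d : ℕ) (F : Finset (EuclideanSpace ℝ (Fin d)))
    (hF : F.Nonempty) (c : EuclideanSpace ℝ (Fin d) → EuclideanSpace ℝ (Fin d))
    (μ : EuclideanSpace ℝ (Fin d)) (hμ : μ = (F.card : ℝ)⁻¹ • ∑ p ∈ F, p)
    (N : Finset (EuclideanSpace ℝ (Fin d)))
    (hN : N = F.filter (fun p =>
      F.card / 2 ≤ (F.filter (fun q => q ≠ p ∧ ‖p - μ‖ ^ 2 ≤ ‖q - μ‖ ^ 2)).card))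
    (pbar : EuclideanSpace ℝ (Fin d)) (hpbar : pbar ∈ N)
    (hmin : ∀ p ∈ N, ‖pbar - c pbar‖ ^ 2 ≤ ‖p - c p‖ ^ 2) :
    (F.card : ℝ) * ‖μ - pbar‖ ^ 2 ≤ 2 * ∑ p ∈ F, ‖μ - p‖ ^ 2 ∧
    (F.card : ℝ) * ‖pbar - c pbar‖ ^ 2 ≤ 2 * ∑ p ∈ F, ‖p - c p‖ ^ 2 := by
  have hNF : N ⊆ F := by rw [hN]; exact filter_subset _ _
  constructor
  · -- first bound
    have hp : pbar ∈ F ∧ F.card / 2 ≤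
        (F.filter (fun q => q ≠ pbar ∧ ‖pbar - μ‖ ^ 2 ≤ ‖q - μ‖ ^ 2)).card := by
      rw [hN] at hpbar; exact mem_filter.mp hpbar
    set S := F.filter (fun q => q ≠ pbar ∧ ‖pbar - μ‖ ^ 2 ≤ ‖q - μ‖ ^ 2) with hS
    have hpS : pbar ∉ S := fun h => (mem_filter.mp h).2.1 rfl
    have hsub : insert pbar S ⊆ F := by
      intro x hx
      rcases mem_insert.mp hx with h | h
      · exact h ▸ hp.1
      · exact mem_of_mem_filter _ h
    have h1 : ((insert pbar S).card : ℝ) * ‖μ - pbar‖ ^ 2 ≤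
        ∑ p ∈ insert pbar S, ‖μ - p‖ ^ 2 := by
      rw [← nsmul_eq_mul]
      apply Finset.card_nsmul_le_sum
      intro x hx
      rcases mem_insert.mp hx with h | h
      · rw [h]
      · have := (mem_filter.mp h).2.2
        rw [norm_sub_rev μ pbar, norm_sub_rev μ x]
        exact this
    have h2 : ∑ p ∈ insert pbar S, ‖μ - p‖ ^ 2 ≤ ∑ p ∈ F, ‖μ - p‖ ^ 2 :=
      Finset.sum_le_sum_of_subset_of_nonneg hsub (fun i _ _ => by positivity)
    have hcard : (insert pbar S).card = S.card + 1 := card_insert_of_notMem hpS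
    have hc : F.card ≤ 2 * (S.card + 1) := by
      have := hp.2; omega
    have hc' : (F.card : ℝ) ≤ 2 * ((insert pbar S).card : ℝ) := by
      rw [hcard]; exact_mod_cast hc
    nlinarith [sq_nonneg ‖μ - pbar‖]
  · -- second bound
    have hNcard : F.card ≤ 2 * N.card := by
      by_cases hE : (F \ N).Nonempty
      · obtain ⟨p₀, hp₀, hp₀min⟩ := Finset.exists_min_image (F \ N) (fun p => ‖p - μ‖ ^ 2) hE
        have hp₀F : p₀ ∈ F := (mem_sdiff.mp hp₀).1
        have hp₀N : p₀ ∉ N := (mem_sdiff.mp hp₀).2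
        set T := F.filter (fun q => ‖q - μ‖ ^ 2 < ‖p₀ - μ‖ ^ 2) with hT
        have hTN : T ⊆ N := by
          intro q hq
          have hqF := (mem_filter.mp hq).1
          have hqlt := (mem_filter.mp hq).2
          by_contra hqN
          have := hp₀min q (mem_sdiff.mpr ⟨hqF, hqN⟩)
          linarith
        have hcount : (F.filter (fun r => r ≠ p₀ ∧ ‖p₀ - μ‖ ^ 2 ≤ ‖r - μ‖ ^ 2)).card
            < F.card / 2 := by
          rw [hN, mem_filter] at hp₀N
          push_neg at hp₀N
          exact hp₀N hp₀F
        have hpart : F ⊆ T ∪ (F.filter (fun r => r ≠ p₀ ∧ ‖p₀ - μ‖ ^ 2 ≤ ‖r - μ‖ ^ 2)) ∪ {p₀} := by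
          intro x hx
          simp only [mem_union, mem_singleton, mem_filter, hT]
          by_cases hx0 : x = p₀
          · right; exact hx0
          rcases le_or_gt (‖p₀ - μ‖ ^ 2) (‖x - μ‖ ^ 2) with h | h
          · left; right; exact ⟨hx, hx0, h⟩
          · left; left; exact ⟨hx, h⟩
        have hcards : F.card ≤ T.card +
            (F.filter (fun r => r ≠ p₀ ∧ ‖p₀ - μ‖ ^ 2 ≤ ‖r - μ‖ ^ 2)).card + 1 := by
          calc F.card ≤ (T ∪ (F.filter (fun r => r ≠ p₀ ∧ ‖p₀ - μ‖ ^ 2 ≤ ‖r - μ‖ ^ 2)) ∪ {p₀}).card :=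
                card_le_card hpart
            _ ≤ (T ∪ (F.filter (fun r => r ≠ p₀ ∧ ‖p₀ - μ‖ ^ 2 ≤ ‖r - μ‖ ^ 2))).card + ({p₀} : Finset _).card :=
                card_union_le _ _
            _ ≤ T.card + (F.filter (fun r => r ≠ p₀ ∧ ‖p₀ - μ‖ ^ 2 ≤ ‖r - μ‖ ^ 2)).card + 1 := by
                have := card_union_le T (F.filter (fun r => r ≠ p₀ ∧ ‖p₀ - μ‖ ^ 2 ≤ ‖r - μ‖ ^ 2))
                simp only [card_singleton]
                omega
        have hTcard : T.card ≤ N.card := card_le_card hTN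
        omega
      · have hFN : F ⊆ N := fun x hx => by
          by_contra hxN
          exact hE ⟨x, mem_sdiff.mpr ⟨hx, hxN⟩⟩
        have := card_le_card hFN
        omega
    have h1 : (N.card : ℝ) * ‖pbar - c pbar‖ ^ 2 ≤ ∑ p ∈ N, ‖p - c p‖ ^ 2 := by
      rw [← nsmul_eq_mul]
      exact Finset.card_nsmul_le_sum _ _ _ hmin
    have h2 : ∑ p ∈ N, ‖p - c p‖ ^ 2 ≤ ∑ p ∈ F, ‖p - c p‖ ^ 2 :=
      Finset.sum_le_sum_of_subset_of_nonneg hNF (fun i _ _ => by positivity)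
    have hc' : (F.card : ℝ) ≤ 2 * (N.card : ℝ) := by exact_mod_cast hNcard
    nlinarith [sq_nonneg ‖pbar - c pbar‖]
end

section
/- In the school-assignment reduction graph: given an Exact-Cover-by-3-Sets instance (U, F) with |U| = 3m that admits an exact cover F' ⊆ F with |F'| = m, the constructed fair assignment instance has a fair assignment of k-center cost 1 in which every cluster has red:blue ratio exactly 1:3. Concretely: assign to the center at each A ∈ F the red vertex A itself and its 3 auxiliary blue vertices; additionally, for each A ∈ F', assign the 3 blue element-vertices of A and one distinct red vertex from T (where |T| = m) to the center at A. Every vertex is assigned to a center at graph distance ≤ 1, each center at A ∈ F' serves 2 red and 6 blue vertices, and each center at A ∉ F' serves 1 red and 3 blue vertices. -/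
open Finset

/-- Vertices of the reduction graph: set-vertices (red), element-vertices (blue),
auxiliary vertices (blue, three per set), and T-vertices (red, indexed by naturals). -/
abbrev Vtx (α : Type*) := Finset α ⊕ (α ⊕ ((Finset α × Fin 3) ⊕ ℕ))

/-- `adjC Fam m A v`: vertex `v` is adjacent to the center vertex at set `A`. -/
def adjC {α : Type*} (Fam : Finset (Finset α)) (m : ℕ) (A : Finset α) :
    Vtx α → Prop
  | Sum.inl _ => False
  | Sum.inr (Sum.inl e) => A ∈ Fam ∧ e ∈ A
  | Sum.inr (Sum.inr (Sum.inl (B, _))) => A ∈ Fam ∧ B = A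
  | Sum.inr (Sum.inr (Sum.inr t)) => A ∈ Fam ∧ t < m

/-- The vertex set of the reduction graph. -/
def vertexFinset {α : Type*} [DecidableEq α] (U : Finset α)
    (Fam : Finset (Finset α)) (m : ℕ) : Finset (Vtx α) :=
  Fam.image Sum.inl ∪ U.image (fun e => Sum.inr (Sum.inl e)) ∪
    (Fam ×ˢ (Finset.univ : Finset (Fin 3))).image
      (fun p => Sum.inr (Sum.inr (Sum.inl p))) ∪
    (Finset.range m).image (fun t => Sum.inr (Sum.inr (Sum.inr t)))

/-- Set-vertices and T-vertices are red; element- and auxiliary vertices are blue. -/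
def isRed {α : Type*} : Vtx α → Bool
  | Sum.inl _ => true
  | Sum.inr (Sum.inr (Sum.inr _)) => true
  | _ => false

theorem exact_cover_gives_fair_assignment {α : Type*} [DecidableEq α]
    (U : Finset α) (Fam : Finset (Finset α)) (m : ℕ)
    (hU : U.card = 3 * m)
    (h3 : ∀ A ∈ Fam, A.card = 3 ∧ A ⊆ U)
    (F' : Finset (Finset α)) (hF' : F' ⊆ Fam) (hF'card : F'.card = m)
    (hcover : ∀ e ∈ U, ∃! A, A ∈ F' ∧ e ∈ A) :
    ∃ φ : Vtx α → Finset α,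
      (∀ v ∈ vertexFinset U Fam m,
        φ v ∈ Fam ∧ (v = Sum.inl (φ v) ∨ adjC Fam m (φ v) v)) ∧
      (∀ A ∈ F',
        ((vertexFinset U Fam m).filter (fun v => φ v = A ∧ isRed v)).card = 2 ∧
        ((vertexFinset U Fam m).filter (fun v => φ v = A ∧ ¬ isRed v)).card = 6) ∧
      (∀ A ∈ Fam, A ∉ F' →
        ((vertexFinset U Fam m).filter (fun v => φ v = A ∧ isRed v)).card = 1 ∧
        ((vertexFinset U Fam m).filter (fun v => φ v = A ∧ ¬ isRed v)).card = 3) := by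
  classical
  set eqv := F'.equivFin with heqv
  set φ : Vtx α → Finset α := fun v => match v with
    | Sum.inl B => B
    | Sum.inr (Sum.inl e) =>
        if h : e ∈ U then F'.choose (fun A => e ∈ A) (hcover e h) else ∅
    | Sum.inr (Sum.inr (Sum.inl (B, _))) => B
    | Sum.inr (Sum.inr (Sum.inr t)) =>
        if h : t < m then (eqv.symm ⟨t, by omega⟩ : Finset α) else ∅
    with hφ
  have hmemI : ∀ B : Finset α, (Sum.inl B : Vtx α) ∈ vertexFinset U Fam m ↔ B ∈ Fam := by
    intro B; simp [vertexFinset]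
  have hmemE : ∀ e : α, (Sum.inr (Sum.inl e) : Vtx α) ∈ vertexFinset U Fam m ↔ e ∈ U := by
    intro e; simp [vertexFinset]
  have hmemA : ∀ (B : Finset α) (i : Fin 3),
      (Sum.inr (Sum.inr (Sum.inl (B, i))) : Vtx α) ∈ vertexFinset U Fam m ↔ B ∈ Fam := by
    intro B i; simp [vertexFinset]
  have hmemT : ∀ t : ℕ, (Sum.inr (Sum.inr (Sum.inr t)) : Vtx α) ∈ vertexFinset U Fam m ↔ t < m := by
    intro t; simp [vertexFinset]
  -- properties of choose
  have hchoose : ∀ (e : α) (h : e ∈ U),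
      F'.choose (fun A => e ∈ A) (hcover e h) ∈ F' ∧
        e ∈ F'.choose (fun A => e ∈ A) (hcover e h) := by
    intro e h
    exact ⟨Finset.choose_mem (fun A => e ∈ A) F' (hcover e h), Finset.choose_property (fun A => e ∈ A) F' (hcover e h)⟩
  have hchoose_eq : ∀ (e : α) (h : e ∈ U) (A : Finset α), A ∈ F' → e ∈ A →
      F'.choose (fun A => e ∈ A) (hcover e h) = A := by
    intro e h A hA heA
    exact ((hcover e h).unique ⟨(hchoose e h).1, (hchoose e h).2⟩ ⟨hA, heA⟩)
  refine ⟨φ, ?_, ?_, ?_⟩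
  · rintro (B | e | ⟨B, i⟩ | t) hv
    · exact ⟨(hmemI B).1 hv, Or.inl rfl⟩
    · have he : e ∈ U := (hmemE e).1 hv
      have : φ (Sum.inr (Sum.inl e)) = F'.choose (fun A => e ∈ A) (hcover e he) := by
        simp [hφ, he]
      rw [this]
      exact ⟨hF' (hchoose e he).1, Or.inr ⟨hF' (hchoose e he).1, (hchoose e he).2⟩⟩
    · have hB : B ∈ Fam := (hmemA B i).1 hv
      exact ⟨hB, Or.inr ⟨hB, rfl⟩⟩
    · have ht : t < m := (hmemT t).1 hv
      have : φ (Sum.inr (Sum.inr (Sum.inr t))) = (eqv.symm ⟨t, by omega⟩ : Finset α) := by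
        simp [hφ, ht]
      rw [this]
      exact ⟨hF' (eqv.symm ⟨t, by omega⟩).2, Or.inr ⟨hF' (eqv.symm ⟨t, by omega⟩).2, ht⟩⟩
  · intro A hA
    have hAF : A ∈ Fam := hF' hA
    set tA : ℕ := (eqv ⟨A, hA⟩).val with htA
    have htAm : tA < m := by rw [← hF'card]; exact (eqv ⟨A, hA⟩).2
    have hφT : ∀ t : ℕ, t < m →
        (φ (Sum.inr (Sum.inr (Sum.inr t))) = A ↔ t = tA) := by
      intro t ht
      have h1 : φ (Sum.inr (Sum.inr (Sum.inr t))) = (eqv.symm ⟨t, by omega⟩ : Finset α) := by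
        simp [hφ, ht]
      rw [h1]
      constructor
      · intro h
        have : eqv.symm ⟨t, by omega⟩ = (⟨A, hA⟩ : F') := Subtype.ext h
        have := congrArg eqv this
        rw [Equiv.apply_symm_apply] at this
        have := congrArg Fin.val this
        simpa [htA] using this
      · intro h
        subst h
        have h2 : (⟨tA, by omega⟩ : Fin F'.card) = eqv ⟨A, hA⟩ := by
          apply Fin.ext; simp [htA]
        rw [h2, Equiv.symm_apply_apply]
    constructor
    · have : (vertexFinset U Fam m).filter (fun v => φ v = A ∧ isRed v) =
          {Sum.inl A, Sum.inr (Sum.inr (Sum.inr tA))} := by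
        ext v
        rcases v with B | e | ⟨B, i⟩ | t
        · simp only [Finset.mem_filter, hmemI, Finset.mem_insert, Finset.mem_singleton]
          constructor
          · rintro ⟨hB, hBA, -⟩
            left; exact congrArg Sum.inl (by simpa [hφ] using hBA)
          · rintro (h | h)
            · obtain rfl : B = A := by simpa using h
              exact ⟨hAF, by simp [hφ], by simp [isRed]⟩
            · simp at h
        · simp [hφ, isRed]
        · simp [hφ, isRed]
        · simp only [Finset.mem_filter, hmemT, Finset.mem_insert, Finset.mem_singleton]
          constructor
          · rintro ⟨ht, hφt, -⟩
            right
            exact congrArg _ (congrArg _ (congrArg _ ((hφT t ht).1 hφt)))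
          · rintro (h | h)
            · simp at h
            · obtain rfl : t = tA := by simpa using h
              exact ⟨htAm, (hφT tA htAm).2 rfl, by simp [isRed]⟩
      rw [this]
      simp
    · have : (vertexFinset U Fam m).filter (fun v => φ v = A ∧ ¬ isRed v) =
          A.image (fun e => (Sum.inr (Sum.inl e) : Vtx α)) ∪
            ({A} ×ˢ (Finset.univ : Finset (Fin 3))).image
              (fun p => (Sum.inr (Sum.inr (Sum.inl p)) : Vtx α)) := by
        ext v
        rcases v with B | e | ⟨B, i⟩ | t
        · simp [isRed]
        · simp only [Finset.mem_filter, hmemE, Finset.mem_union, Finset.mem_image]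
          constructor
          · rintro ⟨he, hφe, -⟩
            have h1 : F'.choose (fun A => e ∈ A) (hcover e he) = A := by
              simpa [hφ, he] using hφe
            left
            exact ⟨e, by rw [← h1]; exact (hchoose e he).2, rfl⟩
          · rintro (⟨x, hx, hxe⟩ | ⟨p, hp, hpe⟩)
            · obtain rfl : x = e := by simpa using hxe
              have he : x ∈ U := (h3 A hAF).2 hx
              refine ⟨he, ?_, by simp [isRed]⟩
              simp only [hφ, he, dif_pos]
              exact hchoose_eq x he A hA hx
            · simp at hpe
        · simp only [Finset.mem_filter, hmemA, Finset.mem_union, Finset.mem_image]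
          constructor
          · rintro ⟨hB, hφB, -⟩
            have hBA : B = A := by simpa [hφ] using hφB
            subst hBA
            right
            exact ⟨(B, i), by simp, rfl⟩
          · rintro (⟨x, hx, hxe⟩ | ⟨p, hp, hpe⟩)
            · simp at hxe
            · obtain ⟨rfl, rfl⟩ : p.1 = B ∧ p.2 = i := by
                constructor <;> [skip; skip] <;>
                  · cases p; simp_all
              obtain rfl : p.1 = A := by
                have := Finset.mem_product.1 hp
                simpa using this.1
              exact ⟨hAF, by simp [hφ], by simp [isRed]⟩
        · simp [hφ, isRed]
      rw [this]
      rw [Finset.card_union_of_disjoint]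
      · rw [Finset.card_image_of_injective _ (fun a b h => by simpa using h),
            Finset.card_image_of_injective _ (fun a b h => by simpa using h)]
        rw [(h3 A hAF).1]
        simp
      · rw [Finset.disjoint_left]
        rintro v hv hv'
        simp only [Finset.mem_image] at hv hv'
        obtain ⟨x, -, rfl⟩ := hv
        obtain ⟨p, -, h⟩ := hv'
        simp at h
  · intro A hAF hA
    have hφT' : ∀ t : ℕ, t < m → φ (Sum.inr (Sum.inr (Sum.inr t))) ≠ A := by
      intro t ht h
      have h1 : φ (Sum.inr (Sum.inr (Sum.inr t))) = (eqv.symm ⟨t, by omega⟩ : Finset α) := by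
        simp [hφ, ht]
      rw [h1] at h
      exact hA (h ▸ (eqv.symm ⟨t, by omega⟩).2)
    constructor
    · have : (vertexFinset U Fam m).filter (fun v => φ v = A ∧ isRed v) =
          {(Sum.inl A : Vtx α)} := by
        ext v
        rcases v with B | e | ⟨B, i⟩ | t
        · simp only [Finset.mem_filter, hmemI, Finset.mem_singleton]
          constructor
          · rintro ⟨hB, hBA, -⟩
            exact congrArg Sum.inl (by simpa [hφ] using hBA)
          · intro h
            obtain rfl : B = A := by simpa using h
            exact ⟨hAF, by simp [hφ], by simp [isRed]⟩
        · simp [hφ, isRed]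
        · simp [hφ, isRed]
        · simp only [Finset.mem_filter, hmemT, Finset.mem_singleton]
          constructor
          · rintro ⟨ht, hφt, -⟩
            exact absurd hφt (hφT' t ht)
          · intro h; simp at h
      rw [this]; simp
    · have : (vertexFinset U Fam m).filter (fun v => φ v = A ∧ ¬ isRed v) =
          ({A} ×ˢ (Finset.univ : Finset (Fin 3))).image
            (fun p => (Sum.inr (Sum.inr (Sum.inl p)) : Vtx α)) := by
        ext v
        rcases v with B | e | ⟨B, i⟩ | t
        · simp [isRed]
        · simp only [Finset.mem_filter, hmemE, Finset.mem_image]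
          constructor
          · rintro ⟨he, hφe, -⟩
            have h1 : F'.choose (fun A => e ∈ A) (hcover e he) = A := by
              simpa [hφ, he] using hφe
            exact absurd (h1 ▸ (hchoose e he).1) hA
          · rintro ⟨p, hp, hpe⟩; simp at hpe
        · simp only [Finset.mem_filter, hmemA, Finset.mem_image]
          constructor
          · rintro ⟨hB, hφB, -⟩
            have hBA : B = A := by simpa [hφ] using hφB
            subst hBA
            exact ⟨(B, i), by simp, rfl⟩
          · rintro ⟨p, hp, hpe⟩
            obtain ⟨rfl, rfl⟩ : p.1 = B ∧ p.2 = i := by cases p; simp_all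
            obtain rfl : p.1 = A := by
              have := Finset.mem_product.1 hp
              simpa using this.1
            exact ⟨hAF, by simp [hφ], by simp [isRed]⟩
        · simp [hφ, isRed]
      rw [this]
      rw [Finset.card_image_of_injective _ (fun a b h => by simpa using h)]
      simp
end

section
/- Conversely, in the same reduction graph, if there is an assignment of all vertices to the opened centers (one at each A ∈ F) such that every vertex is assigned at distance < 3 and every cluster has red:blue ratio 1:3, then the sets A ∈ F whose clusters contain two red vertices form an exact cover of U. -/
open Finset

/-- `within2 Fam m A v`: vertex `v` is at graph distance at most 2 (i.e. `< 3`)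
from the center vertex at set `A`. Since all edges of the reduction graph are
incident to set-vertices, a path of length 2 ending at `Sum.inl A` must start at
a set-vertex `Sum.inl B` sharing a neighbor with `Sum.inl A`. -/
def within2 {α : Type*} (Fam : Finset (Finset α)) (m : ℕ) (A : Finset α)
    (v : Vtx α) : Prop :=
  v = Sum.inl A ∨ adjC Fam m A v ∨
    ∃ (B : Finset α) (w : Vtx α), v = Sum.inl B ∧ adjC Fam m B w ∧ adjC Fam m A w

section Aux
variable {α : Type*} [DecidableEq α] {U : Finset α} {Fam : Finset (Finset α)} {m : ℕ}
  {φ : Vtx α → Finset α}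

lemma mem_vfs_elt_iff {e : α} :
    (Sum.inr (Sum.inl e) : Vtx α) ∈ vertexFinset U Fam m ↔ e ∈ U := by
  simp [vertexFinset]

lemma mem_vfs_aux_iff {B : Finset α} {i : Fin 3} :
    (Sum.inr (Sum.inr (Sum.inl (B, i))) : Vtx α) ∈ vertexFinset U Fam m ↔ B ∈ Fam := by
  simp [vertexFinset]

lemma phi_elt
    (hassign : ∀ v ∈ vertexFinset U Fam m, φ v ∈ Fam ∧ within2 Fam m (φ v) v)
    {e : α} (he : e ∈ U) :
    φ (Sum.inr (Sum.inl e)) ∈ Fam ∧ e ∈ φ (Sum.inr (Sum.inl e)) := by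
  obtain ⟨h1, h2⟩ := hassign _ (mem_vfs_elt_iff.2 he)
  refine ⟨h1, ?_⟩
  rcases h2 with h | h | ⟨B, w, h, _⟩
  · exact absurd h (by simp)
  · exact h.2
  · exact absurd h (by simp)

lemma phi_aux
    (hassign : ∀ v ∈ vertexFinset U Fam m, φ v ∈ Fam ∧ within2 Fam m (φ v) v)
    {B : Finset α} (hB : B ∈ Fam) (i : Fin 3) :
    φ (Sum.inr (Sum.inr (Sum.inl (B, i)))) = B := by
  obtain ⟨h1, h2⟩ := hassign _ (mem_vfs_aux_iff.2 hB)
  rcases h2 with h | h | ⟨C, w, h, _⟩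
  · exact absurd h (by simp)
  · exact h.2.symm
  · exact absurd h (by simp)

lemma blue_count
    (h3 : ∀ A ∈ Fam, A.card = 3 ∧ A ⊆ U)
    (hassign : ∀ v ∈ vertexFinset U Fam m, φ v ∈ Fam ∧ within2 Fam m (φ v) v)
    {A : Finset α} (hA : A ∈ Fam) :
    ((vertexFinset U Fam m).filter (fun v => φ v = A ∧ ¬ isRed v)).card =
      (A.filter (fun x => φ (Sum.inr (Sum.inl x)) = A)).card + 3 := by
  have hsub := (h3 A hA).2
  have hset : ((vertexFinset U Fam m).filter (fun v => φ v = A ∧ ¬ isRed v)) =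
      (A.filter (fun x => φ (Sum.inr (Sum.inl x)) = A)).image
        (fun x => (Sum.inr (Sum.inl x) : Vtx α)) ∪
      (Finset.univ : Finset (Fin 3)).image
        (fun i => (Sum.inr (Sum.inr (Sum.inl (A, i)))) : Fin 3 → Vtx α) := by
    ext v
    rw [mem_filter, mem_union, mem_image, mem_image]
    rcases v with B | e | ⟨B, i⟩ | t
    · simp [isRed]
    · constructor
      · rintro ⟨hv, hφ, -⟩
        have heU : e ∈ U := mem_vfs_elt_iff.1 hv
        exact Or.inl ⟨e, mem_filter.2 ⟨hφ ▸ (phi_elt hassign heU).2, hφ⟩, rfl⟩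
      · rintro (⟨x, hx, hxe⟩ | ⟨i, -, h⟩)
        · obtain ⟨hxA, hφ⟩ := mem_filter.1 hx
          obtain rfl : x = e := by simpa using hxe
          exact ⟨mem_vfs_elt_iff.2 (hsub hxA), hφ, by simp [isRed]⟩
        · simp at h
    · constructor
      · rintro ⟨hv, hφ, -⟩
        have hBF : B ∈ Fam := mem_vfs_aux_iff.1 hv
        have hBA : B = A := (phi_aux hassign hBF i) ▸ hφ
        subst hBA
        exact Or.inr ⟨i, mem_univ i, rfl⟩
      · rintro (⟨x, -, h⟩ | ⟨j, -, h⟩)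
        · simp at h
        · obtain ⟨rfl, rfl⟩ : A = B ∧ j = i := by simpa using h
          exact ⟨mem_vfs_aux_iff.2 hA, phi_aux hassign hA _, by simp [isRed]⟩
    · simp [isRed]
  rw [hset, card_union_of_disjoint, card_image_of_injective _ (fun a b h => by simpa using h),
    card_image_of_injective _ (fun a b h => by simpa using h)]
  · simp
  · simp [disjoint_left]

end Aux

theorem fair_assignment_gives_exact_cover {α : Type*} [DecidableEq α]
    (U : Finset α) (Fam : Finset (Finset α)) (m : ℕ)
    (hU : U.card = 3 * m)
    (h3 : ∀ A ∈ Fam, A.card = 3 ∧ A ⊆ U)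
    (φ : Vtx α → Finset α)
    (hassign : ∀ v ∈ vertexFinset U Fam m,
      φ v ∈ Fam ∧ within2 Fam m (φ v) v)
    (hratio : ∀ A ∈ Fam,
      ((vertexFinset U Fam m).filter (fun v => φ v = A ∧ ¬ isRed v)).card =
        3 * ((vertexFinset U Fam m).filter (fun v => φ v = A ∧ isRed v)).card) :
    ∀ e ∈ U, ∃! A, (A ∈ Fam ∧
      ((vertexFinset U Fam m).filter (fun v => φ v = A ∧ isRed v)).card = 2) ∧
      e ∈ A := by
  intro e he
  obtain ⟨hAF, heA⟩ := phi_elt hassign he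
  set A := φ (Sum.inr (Sum.inl e)) with hAdef
  have key : ∀ B ∈ Fam,
      ((vertexFinset U Fam m).filter (fun v => φ v = B ∧ isRed v)).card = 2 ↔
      (B.filter (fun x => φ (Sum.inr (Sum.inl x)) = B)).card = 3 := by
    intro B hB
    have h := hratio B hB
    rw [blue_count h3 hassign hB] at h
    omega
  have hAcard : (A.filter (fun x => φ (Sum.inr (Sum.inl x)) = A)).card = 3 := by
    have h := hratio A hAF
    rw [blue_count h3 hassign hAF] at h
    have hle : (A.filter (fun x => φ (Sum.inr (Sum.inl x)) = A)).card ≤ 3 :=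
      le_trans (card_filter_le _ _) (le_of_eq (h3 A hAF).1)
    have hge : 1 ≤ (A.filter (fun x => φ (Sum.inr (Sum.inl x)) = A)).card :=
      card_pos.2 ⟨e, mem_filter.2 ⟨heA, rfl⟩⟩
    omega
  refine ⟨A, ⟨⟨hAF, (key A hAF).2 hAcard⟩, heA⟩, ?_⟩
  rintro B ⟨⟨hBF, hB2⟩, heB⟩
  have hBcard := (key B hBF).1 hB2
  have hfull : B.filter (fun x => φ (Sum.inr (Sum.inl x)) = B) = B := by
    apply Finset.eq_of_subset_of_card_le (filter_subset _ _)
    rw [hBcard, (h3 B hBF).1]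
  have hmem : e ∈ B.filter (fun x => φ (Sum.inr (Sum.inl x)) = B) := by
    rw [hfull]; exact heB
  rw [hAdef]
  exact ((mem_filter.1 hmem).2).symm
end

section
/- Fairlet union cost bound for k-median: let P be a finite point set in a metric space, partitioned into fairlets F_i with centers c_i (i ∈ I). Let c : P → L be any assignment of points to centers (a colorblind clustering). For each i, choose p_i ∈ F_i minimizing d(c_i, p) + d(p, c(p)) over p ∈ F_i, and assign all points of F_i to c(p_i). Then the total cost satisfies ∑_{i ∈ I} ∑_{p ∈ F_i} d(p, c(p_i)) ≤ 2·∑_{i ∈ I} ∑_{p ∈ F_i} d(p, c_i) + ∑_{p ∈ P} d(p, c(p)). -/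
open Finset

/-- Fairlet union cost bound for k-median. -/
theorem fairlet_union_cost_bound {M ι : Type*} [MetricSpace M] [Fintype ι]
    [DecidableEq M]
    (P : Finset M) (F : ι → Finset M) (cc : ι → M) (c : M → M)
    (hne : ∀ i, (F i).Nonempty)
    (hdisj : ∀ i j : ι, i ≠ j → Disjoint (F i) (F j))
    (hunion : ∀ p : M, p ∈ P ↔ ∃ i, p ∈ F i)
    (pbar : ι → M) (hpbar : ∀ i, pbar i ∈ F i)
    (hmin : ∀ i, ∀ p ∈ F i,
      dist (cc i) (pbar i) + dist (pbar i) (c (pbar i)) ≤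
        dist (cc i) p + dist p (c p)) :
    ∑ i : ι, ∑ p ∈ F i, dist p (c (pbar i)) ≤
      2 * (∑ i : ι, ∑ p ∈ F i, dist p (cc i)) + ∑ p ∈ P, dist p (c p) := by
  have hPeq : P = Finset.univ.biUnion F := by
    ext p; simp [hunion]
  have hP : ∑ p ∈ P, dist p (c p) = ∑ i : ι, ∑ p ∈ F i, dist p (c p) := by
    rw [hPeq, Finset.sum_biUnion]
    intro i _ j _ hij
    exact hdisj i j hij
  rw [hP, Finset.mul_sum, ← Finset.sum_add_distrib]
  apply Finset.sum_le_sum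
  intro i _
  rw [Finset.mul_sum, ← Finset.sum_add_distrib]
  apply Finset.sum_le_sum
  intro p hp
  have h1 := dist_triangle4 p (cc i) (pbar i) (c (pbar i))
  have h2 := hmin i p hp
  nlinarith [dist_comm (cc i) p]
end
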